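/- Let L be a bounded lattice, a ∈ L \ {0,1}, and T₁ a t-norm on [a,1]. Let I_a be the set of elements incomparable with a. Then the binary operation T⁽²⁾ : L² → L defined by T⁽²⁾(x,y) = x ∧ y if x = 1 or y = 1; T⁽²⁾(x,y) = 0 if (x,y) ∈ [0,a)² ∪ ([0,a) × I_a) ∪ (I_a × [0,a)) ∪ (I_a × I_a); T⁽²⁾(x,y) = T₁(x,y) if x, y ∈ [a,1); and T⁽²⁾(x,y) = x ∧ y ∧ a otherwise, is a t-norm on L. -/

import Mathlib

open Classical in
/-- The operation `T⁽²⁾` of Corollary 5.2: `x ⊓ y` if `x = 1` or `y = 1`; `0` if both `x`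
and `y` lie in `[0,a) ∪ I_a` (where `I_a` is the set of elements incomparable with `a`);
`T₁(x,y)` if `x, y ∈ [a,1)`; and `x ⊓ y ⊓ a` otherwise. -/
noncomputable def Ttwo {L : Type*} [Lattice L] [BoundedOrder L]
    (a : L) (T₁ : L → L → L) (x y : L) : L :=
  if x = ⊤ ∨ y = ⊤ then x ⊓ y
  else if (x < a ∨ (¬ x ≤ a ∧ ¬ a ≤ x)) ∧ (y < a ∨ (¬ y ≤ a ∧ ¬ a ≤ y)) then ⊥
  else if (a ≤ x ∧ x < ⊤) ∧ (a ≤ y ∧ y < ⊤) then T₁ x y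
  else x ⊓ y ⊓ a

section Aux

variable {L : Type*} [Lattice L] [BoundedOrder L] (a : L) (T₁ : L → L → L)

private lemma Ttwo_P {x : L} : (x < a ∨ (¬ x ≤ a ∧ ¬ a ≤ x)) ↔ ¬ a ≤ x := by
  constructor
  · rintro (h | ⟨h1, h2⟩)
    · exact h.not_ge
    · exact h2
  · intro h
    by_cases hxa : x ≤ a
    · exact Or.inl (lt_of_le_not_ge hxa h)
    · exact Or.inr ⟨hxa, h⟩

private lemma Ttwo_ne_top {x : L} (h : ¬ a ≤ x) : x ≠ ⊤ := by
  rintro rfl; exact h le_top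

private lemma Ttwo_top_left (y : L) : Ttwo a T₁ ⊤ y = y := by
  unfold Ttwo
  rw [if_pos (Or.inl rfl), top_inf_eq]

private lemma Ttwo_top_right (x : L) : Ttwo a T₁ x ⊤ = x := by
  unfold Ttwo
  rw [if_pos (Or.inr rfl), inf_top_eq]

private lemma Ttwo_BB {x y : L} (hx : ¬ a ≤ x) (hy : ¬ a ≤ y) : Ttwo a T₁ x y = ⊥ := by
  unfold Ttwo
  rw [if_neg (by push_neg; exact ⟨Ttwo_ne_top a hx, Ttwo_ne_top a hy⟩),
    if_pos ⟨(Ttwo_P a).mpr hx, (Ttwo_P a).mpr hy⟩]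

private lemma Ttwo_AA {x y : L} (hx : a ≤ x) (hy : a ≤ y) (hx' : x ≠ ⊤) (hy' : y ≠ ⊤) :
    Ttwo a T₁ x y = T₁ x y := by
  unfold Ttwo
  rw [if_neg (by push_neg; exact ⟨hx', hy'⟩),
    if_neg (fun h => (Ttwo_P a).mp h.1 hx),
    if_pos ⟨⟨hx, hx'.lt_top⟩, ⟨hy, hy'.lt_top⟩⟩]

private lemma Ttwo_AB {x y : L} (hx : a ≤ x) (hx' : x ≠ ⊤) (hy : ¬ a ≤ y) :
    Ttwo a T₁ x y = y ⊓ a := by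
  unfold Ttwo
  rw [if_neg (by push_neg; exact ⟨hx', Ttwo_ne_top a hy⟩),
    if_neg (fun h => (Ttwo_P a).mp h.1 hx),
    if_neg (fun h => hy h.2.1), inf_assoc]
  exact inf_eq_right.mpr (le_trans inf_le_right hx)

private lemma Ttwo_BA {x y : L} (hx : ¬ a ≤ x) (hy : a ≤ y) (hy' : y ≠ ⊤) :
    Ttwo a T₁ x y = x ⊓ a := by
  unfold Ttwo
  rw [if_neg (by push_neg; exact ⟨Ttwo_ne_top a hx, hy'⟩),
    if_neg (fun h => (Ttwo_P a).mp h.2 hy),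
    if_neg (fun h => hx h.1.1), inf_right_comm]
  exact inf_eq_left.mpr (le_trans inf_le_right hy)

end Aux

/-- if `T₁` is a t-norm on `[a,1]` for `a ∈ L \ {0,1}`, then `T⁽²⁾` is a
t-norm on `L` (commutative, associative, increasing, with neutral element `1`). -/
theorem stmt_12 {L : Type*} [Lattice L] [BoundedOrder L] (a : L)
    (ha0 : a ≠ ⊥) (ha1 : a ≠ ⊤) (T₁ : L → L → L)
    (hT₁mem : ∀ x y, a ≤ x → a ≤ y → a ≤ T₁ x y)
    (hT₁comm : ∀ x y, a ≤ x → a ≤ y → T₁ x y = T₁ y x)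
    (hT₁assoc : ∀ x y z, a ≤ x → a ≤ y → a ≤ z → T₁ (T₁ x y) z = T₁ x (T₁ y z))
    (hT₁mono : ∀ x y z, a ≤ x → a ≤ y → a ≤ z → x ≤ y → T₁ x z ≤ T₁ y z ∧ T₁ z x ≤ T₁ z y)
    (hT₁one : ∀ x, a ≤ x → T₁ ⊤ x = x) :
    (∀ x y, Ttwo a T₁ x y = Ttwo a T₁ y x) ∧
    (∀ x y z, Ttwo a T₁ (Ttwo a T₁ x y) z = Ttwo a T₁ x (Ttwo a T₁ y z)) ∧
    (∀ x y z : L, x ≤ y → Ttwo a T₁ x z ≤ Ttwo a T₁ y z) ∧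
    (∀ x, Ttwo a T₁ ⊤ x = x) := by
  -- bound on T₁
  have hT₁le : ∀ x y : L, a ≤ x → a ≤ y → y ≠ ⊤ → T₁ x y ≠ ⊤ := by
    intro x y hx hy hy' h
    have h1 : T₁ x y ≤ T₁ ⊤ y := (hT₁mono x ⊤ y hx le_top hy le_top).1
    rw [hT₁one y hy] at h1
    exact hy' (top_le_iff.mp (h ▸ h1))
  have hbotB : ¬ a ≤ (⊥ : L) := fun h => ha0 (le_bot_iff.mp h)
  have hinfB : ∀ x : L, ¬ a ≤ x → ¬ a ≤ x ⊓ a := fun x hx h => hx ((le_inf_iff.mp h).1)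
  refine ⟨?_, ?_, ?_, fun x => Ttwo_top_left a T₁ x⟩
  · -- commutativity
    intro x y
    by_cases hx' : x = ⊤
    · subst hx'; rw [Ttwo_top_left, Ttwo_top_right]
    by_cases hy' : y = ⊤
    · subst hy'; rw [Ttwo_top_left, Ttwo_top_right]
    by_cases hx : a ≤ x <;> by_cases hy : a ≤ y
    · rw [Ttwo_AA a T₁ hx hy hx' hy', Ttwo_AA a T₁ hy hx hy' hx', hT₁comm x y hx hy]
    · rw [Ttwo_AB a T₁ hx hx' hy, Ttwo_BA a T₁ hy hx hx']
    · rw [Ttwo_BA a T₁ hx hy hy', Ttwo_AB a T₁ hy hy' hx]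
    · rw [Ttwo_BB a T₁ hx hy, Ttwo_BB a T₁ hy hx]
  · -- associativity
    intro x y z
    by_cases hx' : x = ⊤
    · subst hx'; rw [Ttwo_top_left, Ttwo_top_left]
    by_cases hz' : z = ⊤
    · subst hz'; rw [Ttwo_top_right, Ttwo_top_right]
    by_cases hy' : y = ⊤
    · subst hy'; rw [Ttwo_top_right, Ttwo_top_left]
    by_cases hx : a ≤ x <;> by_cases hy : a ≤ y <;> by_cases hz : a ≤ z
    · -- AAA
      have h1 : a ≤ T₁ x y := hT₁mem x y hx hy
      have h1' : T₁ x y ≠ ⊤ := hT₁le x y hx hy hy'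
      have h2 : a ≤ T₁ y z := hT₁mem y z hy hz
      have h2' : T₁ y z ≠ ⊤ := hT₁le y z hy hz hz'
      rw [Ttwo_AA a T₁ hx hy hx' hy', Ttwo_AA a T₁ h1 hz h1' hz',
        Ttwo_AA a T₁ hy hz hy' hz', Ttwo_AA a T₁ hx h2 hx' h2',
        hT₁assoc x y z hx hy hz]
    · -- AAB
      have h1 : a ≤ T₁ x y := hT₁mem x y hx hy
      have h1' : T₁ x y ≠ ⊤ := hT₁le x y hx hy hy'
      rw [Ttwo_AA a T₁ hx hy hx' hy', Ttwo_AB a T₁ h1 h1' hz,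
        Ttwo_AB a T₁ hy hy' hz, Ttwo_AB a T₁ hx hx' (hinfB z hz),
        inf_assoc, inf_idem]
    · -- ABA
      rw [Ttwo_AB a T₁ hx hx' hy,
        Ttwo_BA a T₁ (hinfB y hy) hz hz',
        Ttwo_BA a T₁ hy hz hz',
        Ttwo_AB a T₁ hx hx' (hinfB y hy)]
    · -- ABB
      rw [Ttwo_AB a T₁ hx hx' hy,
        Ttwo_BB a T₁ (hinfB y hy) hz,
        Ttwo_BB a T₁ hy hz,
        Ttwo_AB a T₁ hx hx' hbotB, bot_inf_eq]
    · -- BAA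
      have h2 : a ≤ T₁ y z := hT₁mem y z hy hz
      have h2' : T₁ y z ≠ ⊤ := hT₁le y z hy hz hz'
      rw [Ttwo_BA a T₁ hx hy hy',
        Ttwo_BA a T₁ (hinfB x hx) hz hz',
        Ttwo_AA a T₁ hy hz hy' hz',
        Ttwo_BA a T₁ hx h2 h2',
        inf_assoc, inf_idem]
    · -- BAB
      rw [Ttwo_BA a T₁ hx hy hy',
        Ttwo_BB a T₁ (hinfB x hx) hz,
        Ttwo_AB a T₁ hy hy' hz,
        Ttwo_BB a T₁ hx (hinfB z hz)]
    · -- BBA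
      rw [Ttwo_BB a T₁ hx hy,
        Ttwo_BA a T₁ hbotB hz hz',
        Ttwo_BA a T₁ hy hz hz',
        Ttwo_BB a T₁ hx (hinfB y hy), bot_inf_eq]
    · -- BBB
      rw [Ttwo_BB a T₁ hx hy,
        Ttwo_BB a T₁ hy hz,
        Ttwo_BB a T₁ hbotB hz,
        Ttwo_BB a T₁ hx hbotB]
  · -- monotonicity
    intro x y z hxy
    by_cases hz' : z = ⊤
    · subst hz'; rw [Ttwo_top_right, Ttwo_top_right]; exact hxy
    by_cases hx' : x = ⊤
    · have : y = ⊤ := top_le_iff.mp (hx' ▸ hxy)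
      subst hx'; subst this; exact le_rfl
    by_cases hx : a ≤ x
    · -- x ∈ A, so y ∈ A or y = ⊤
      have hy : a ≤ y := hx.trans hxy
      by_cases hy' : y = ⊤
      · subst hy'
        rw [Ttwo_top_left]
        by_cases hz : a ≤ z
        · rw [Ttwo_AA a T₁ hx hz hx' hz']
          have h1 : T₁ x z ≤ T₁ ⊤ z := (hT₁mono x ⊤ z hx le_top hz le_top).1
          rwa [hT₁one z hz] at h1
        · rw [Ttwo_AB a T₁ hx hx' hz]; exact inf_le_left
      · by_cases hz : a ≤ z
        · rw [Ttwo_AA a T₁ hx hz hx' hz', Ttwo_AA a T₁ hy hz hy' hz']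
          exact (hT₁mono x y z hx hy hz hxy).1
        · rw [Ttwo_AB a T₁ hx hx' hz, Ttwo_AB a T₁ hy hy' hz]
    · -- x ∈ B
      by_cases hz : a ≤ z
      · -- Ttwo x z = x ⊓ a
        rw [Ttwo_BA a T₁ hx hz hz']
        by_cases hy' : y = ⊤
        · subst hy'; rw [Ttwo_top_left]
          exact le_trans inf_le_right hz
        by_cases hy : a ≤ y
        · rw [Ttwo_AA a T₁ hy hz hy' hz']
          exact le_trans inf_le_right (hT₁mem y z hy hz)
        · rw [Ttwo_BA a T₁ hy hz hz']
          exact inf_le_inf_right a hxy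
      · rw [Ttwo_BB a T₁ hx hz]; exact bot_le
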